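/- Assume r and θ are nonconstant. For every real number k ≠ 0, the polynomials α(t,s) and β_k(t,s) have no nonconstant common divisor in ℝ[t,s], i.e. gcd(α, β_k) = 1. In particular, for each real k ≠ 0 the system r(t) = r(s), θ(t) = θ(s) + 2kπ has only finitely many solutions (t,s) ∈ Ω × Ω. -/

import Mathlib

/- In ℝ[t,s] (modelled as MvPolynomial (Fin 2) ℝ, with t = X 0 and s = X 1):
`inT p` is p(t), `inS p` is p(s). -/
noncomputable def inT (p : Polynomial ℝ) : MvPolynomial (Fin 2) ℝ :=
  Polynomial.aeval (MvPolynomial.X 0) p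

noncomputable def inS (p : Polynomial ℝ) : MvPolynomial (Fin 2) ℝ :=
  Polynomial.aeval (MvPolynomial.X 1) p

/-- α(t,s) = A(t)B(s) − A(s)B(t). -/
noncomputable def alphaPoly (A B : Polynomial ℝ) : MvPolynomial (Fin 2) ℝ :=
  inT A * inS B - inS A * inT B

/-- β_k(t,s) = C(t)D(s) − C(s)D(t) − 2kπ·D(t)D(s). -/
noncomputable def betaPoly (C D : Polynomial ℝ) (k : ℝ) : MvPolynomial (Fin 2) ℝ :=
  inT C * inS D - inS C * inT D -
    MvPolynomial.C (2 * k * Real.pi) * (inT D * inS D)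

/- STATEMENT 3: if r and θ are nonconstant, then for every real k ≠ 0 the polynomials
α and β_k have no nonconstant common divisor, and the system
r(t) = r(s), θ(t) = θ(s) + 2kπ has only finitely many solutions in Ω × Ω. -/
open Polynomial MvPolynomial

noncomputable def swapE : MvPolynomial (Fin 2) ℝ ≃ₐ[ℝ] MvPolynomial (Fin 2) ℝ :=
  MvPolynomial.renameEquiv ℝ (Equiv.swap 0 1)

noncomputable def eQ : MvPolynomial (Fin 2) ℝ ≃ₐ[ℝ] Polynomial (Polynomial ℝ) :=
  (MvPolynomial.renameEquiv ℝ (Equiv.swap 0 1)).trans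
    ((MvPolynomial.finSuccEquiv ℝ 1).trans
      (Polynomial.mapAlgEquiv
        ((MvPolynomial.finSuccEquiv ℝ 0).trans
          (Polynomial.mapAlgEquiv (MvPolynomial.isEmptyAlgEquiv ℝ (Fin 0))))))

lemma eQ_X0 : eQ (MvPolynomial.X 0) = Polynomial.C Polynomial.X := by
  have h1 : (1 : Fin 2) = Fin.succ 0 := rfl
  simp only [eQ, AlgEquiv.trans_apply, MvPolynomial.renameEquiv_apply,
    MvPolynomial.rename_X, Equiv.swap_apply_left, h1, MvPolynomial.finSuccEquiv_X_succ,
    Polynomial.coe_mapAlgEquiv, Polynomial.map_C, AlgEquiv.trans_apply,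
    MvPolynomial.finSuccEquiv_X_zero, Polynomial.map_X]
  simp [MvPolynomial.finSuccEquiv_X_zero, Polynomial.coe_mapAlgEquiv]

lemma eQ_X1 : eQ (MvPolynomial.X 1) = Polynomial.X := by
  simp only [eQ, AlgEquiv.trans_apply, MvPolynomial.renameEquiv_apply,
    MvPolynomial.rename_X, Equiv.swap_apply_right, MvPolynomial.finSuccEquiv_X_zero,
    Polynomial.coe_mapAlgEquiv, Polynomial.map_X]

lemma eQ_inT (p : Polynomial ℝ) : eQ (inT p) = Polynomial.C p := by
  rw [inT, ← Polynomial.aeval_algHom_apply eQ, eQ_X0]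
  rw [show (Polynomial.C Polynomial.X : Polynomial (Polynomial ℝ)) =
    algebraMap (Polynomial ℝ) (Polynomial (Polynomial ℝ)) Polynomial.X from rfl,
    Polynomial.aeval_algebraMap_apply, Polynomial.aeval_X_left_apply,
    Polynomial.algebraMap_eq]

lemma eQ_inS (p : Polynomial ℝ) : eQ (inS p) = p.map Polynomial.C := by
  rw [inS, ← Polynomial.aeval_algHom_apply eQ, eQ_X1]
  induction p using Polynomial.induction_on' with
  | add f g hf hg => simp [hf, hg]
  | monomial n a =>
      simp [Polynomial.aeval_monomial, Polynomial.map_monomial, Polynomial.algebraMap_eq,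
        Polynomial.C_mul_X_pow_eq_monomial]

lemma swapE_inT (p : Polynomial ℝ) : swapE (inT p) = inS p := by
  rw [inT, inS, ← Polynomial.aeval_algHom_apply swapE]
  simp [swapE, Equiv.swap_apply_left]

lemma swapE_inS (p : Polynomial ℝ) : swapE (inS p) = inT p := by
  rw [inT, inS, ← Polynomial.aeval_algHom_apply swapE]
  simp [swapE, Equiv.swap_apply_right]

lemma swapE_alpha (A B : Polynomial ℝ) : swapE (alphaPoly A B) = - alphaPoly A B := by
  simp only [alphaPoly, map_sub, map_mul, swapE_inT, swapE_inS]; ring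

/-- a polynomial in `t` alone dividing `alphaPoly A B` is a unit. -/
lemma onevar_t {A B : Polynomial ℝ} (hB : B ≠ 0) (hAB : IsCoprime A B)
    (hr : ¬ (A.natDegree = 0 ∧ B.natDegree = 0))
    {p : Polynomial ℝ} (hp : inT p ∣ alphaPoly A B) : IsUnit p := by
  have hd : Polynomial.C p ∣ eQ (alphaPoly A B) := by
    rw [← eQ_inT]; exact map_dvd eQ.toRingHom hp
  have hexp : eQ (alphaPoly A B) =
      Polynomial.C A * B.map Polynomial.C - A.map Polynomial.C * Polynomial.C B := by
    simp [alphaPoly, eQ_inT, eQ_inS]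
  rw [hexp, Polynomial.C_dvd_iff_dvd_coeff] at hd
  have key : ∀ j, p ∣ A * Polynomial.C (B.coeff j) - Polynomial.C (A.coeff j) * B := by
    intro j
    have := hd j
    simpa [Polynomial.coeff_map, Polynomial.coeff_C_mul, Polynomial.coeff_mul_C,
      mul_comm] using this
  by_cases hprop : ∀ i j, A.coeff i * B.coeff j - A.coeff j * B.coeff i = 0
  · exfalso
    have hbJ : B.coeff B.natDegree ≠ 0 := Polynomial.leadingCoeff_ne_zero.mpr hB
    set J := B.natDegree with hJ
    have hABprop : A * Polynomial.C (B.coeff J) = Polynomial.C (A.coeff J) * B := by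
      ext i
      simp only [Polynomial.coeff_mul_C, Polynomial.coeff_C_mul]
      linarith [hprop i J]
    have hBdvd : B ∣ A * Polynomial.C (B.coeff J) := ⟨Polynomial.C (A.coeff J), by
      rw [hABprop]; ring⟩
    have hBC : B ∣ Polynomial.C (B.coeff J) := hAB.symm.dvd_of_dvd_mul_left hBdvd
    have hBdeg : B.natDegree = 0 := by
      have := Polynomial.natDegree_le_of_dvd hBC (by simpa using hbJ)
      simpa [Polynomial.natDegree_C] using this
    have hAdeg : A.natDegree = 0 := by
      have h1 : (A * Polynomial.C (B.coeff J)).natDegree = A.natDegree := by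
        simp [Polynomial.natDegree_mul_C hbJ]
      have h2 : (Polynomial.C (A.coeff J) * B).natDegree ≤ B.natDegree :=
        le_trans (Polynomial.natDegree_mul_le) (by simp)
      rw [hABprop] at h1
      omega
    exact hr ⟨hAdeg, hBdeg⟩
  · push_neg at hprop
    obtain ⟨i, j, hij⟩ := hprop
    set c := A.coeff i * B.coeff j - A.coeff j * B.coeff i with hc
    have h1 : p ∣ Polynomial.C c * B := by
      have := dvd_sub ((key j).mul_left (Polynomial.C (B.coeff i)))
        ((key i).mul_left (Polynomial.C (B.coeff j)))
      have heq : Polynomial.C (B.coeff i) * (A * Polynomial.C (B.coeff j)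
            - Polynomial.C (A.coeff j) * B)
          - Polynomial.C (B.coeff j) * (A * Polynomial.C (B.coeff i)
            - Polynomial.C (A.coeff i) * B) = Polynomial.C c * B := by
        rw [hc, map_sub, map_mul, map_mul]; ring
      rwa [heq] at this
    have h2 : p ∣ Polynomial.C c * A := by
      have := dvd_sub ((key j).mul_left (Polynomial.C (A.coeff i)))
        ((key i).mul_left (Polynomial.C (A.coeff j)))
      have heq : Polynomial.C (A.coeff i) * (A * Polynomial.C (B.coeff j)
            - Polynomial.C (A.coeff j) * B)
          - Polynomial.C (A.coeff j) * (A * Polynomial.C (B.coeff i)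
            - Polynomial.C (A.coeff i) * B) = Polynomial.C c * A := by
        rw [hc, map_sub, map_mul, map_mul]; ring
      rwa [heq] at this
    obtain ⟨u, v, huv⟩ := hAB
    have h3 : p ∣ Polynomial.C c := by
      have : Polynomial.C c = u * (Polynomial.C c * A) + v * (Polynomial.C c * B) := by
        have : u * (Polynomial.C c * A) + v * (Polynomial.C c * B)
            = Polynomial.C c * (u * A + v * B) := by ring
        rw [this, huv, mul_one]
      rw [this]
      exact dvd_add (h2.mul_left u) (h1.mul_left v)
    have hcne : Polynomial.C c ≠ 0 := by simpa using hij
    have hdeg : p.degree = 0 := by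
      have h4 := Polynomial.degree_le_of_dvd h3 hcne
      rw [Polynomial.degree_C (by simpa using hij)] at h4
      refine le_antisymm h4 ?_
      refine Polynomial.zero_le_degree_iff.mpr (fun h0 => ?_)
      rw [h0, zero_dvd_iff] at h3
      exact hcne h3
    exact Polynomial.isUnit_iff_degree_eq_zero.mpr hdeg

/-- a polynomial in `s` alone dividing `alphaPoly A B` is a unit. -/
lemma onevar_s {A B : Polynomial ℝ} (hB : B ≠ 0) (hAB : IsCoprime A B)
    (hr : ¬ (A.natDegree = 0 ∧ B.natDegree = 0))
    {p : Polynomial ℝ} (hp : inS p ∣ alphaPoly A B) : IsUnit p := by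
  refine onevar_t hB hAB hr (p := p) ?_
  have := map_dvd swapE hp
  rw [swapE_inS, swapE_alpha] at this
  simpa using (dvd_neg.mpr this)


section Aux

local notation "K" => FractionRing (Polynomial ℝ)

/-- helper: scalar action vs C-multiplication in `K[X]`. -/
lemma smul_eq_CC (b : Polynomial ℝ) (w : Polynomial K) :
    b • w = Polynomial.C (algebraMap (Polynomial ℝ) K b) * w := by
  ext n
  simp [Polynomial.coeff_smul, Polynomial.coeff_C_mul, Algebra.smul_def]

set_option maxHeartbeats 1000000 in
lemma aux_bezout (P Q : MvPolynomial (Fin 2) ℝ)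
    (hrel : ∀ c : MvPolynomial (Fin 2) ℝ, c ∣ P → c ∣ Q → IsUnit c) (hP : P ≠ 0) :
    ∃ d : Polynomial ℝ, d ≠ 0 ∧ ∃ U V : MvPolynomial (Fin 2) ℝ,
      U * P + V * Q = inT d := by
  classical
  set P' := eQ P with hP'
  set Q' := eQ Q with hQ'
  have hP'0 : P' ≠ 0 := fun h => hP (by simpa [hP'] using congrArg eQ.symm h)
  set φ := Polynomial.mapRingHom (algebraMap (Polynomial ℝ) K) with hφ
  have hφinj : Function.Injective φ :=
    Polynomial.map_injective _ (IsFractionRing.injective _ _)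
  have hφP : φ P' ≠ 0 := fun h => hP'0 (hφinj (by simpa using h))
  -- coprimality over the fraction field
  have hcop : IsCoprime (φ P') (φ Q') := by
    rw [← EuclideanDomain.gcd_isUnit_iff]
    by_contra hg
    have hgdvdP : EuclideanDomain.gcd (φ P') (φ Q') ∣ φ P' := EuclideanDomain.gcd_dvd_left _ _
    have hgdvdQ : EuclideanDomain.gcd (φ P') (φ Q') ∣ φ Q' := EuclideanDomain.gcd_dvd_right _ _
    have hgne : EuclideanDomain.gcd (φ P') (φ Q') ≠ 0 := fun h => hφP (by
      have := hgdvdP; rwa [h, zero_dvd_iff] at this)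
    obtain ⟨g₁, hg₁irr, hg₁dvd⟩ := WfDvdMonoid.exists_irreducible_factor hg hgne
    have hg₁P : g₁ ∣ φ P' := hg₁dvd.trans hgdvdP
    have hg₁Q : g₁ ∣ φ Q' := hg₁dvd.trans hgdvdQ
    have hg₁prime : Prime g₁ := hg₁irr.prime
    -- find an irreducible factor f of P' whose image is divisible by g₁
    obtain ⟨uu, huu⟩ := UniqueFactorizationMonoid.factors_prod hP'0
    have hg₁prod : g₁ ∣ ((UniqueFactorizationMonoid.factors P').map φ).prod := by
      have h1 : φ P' = ((UniqueFactorizationMonoid.factors P').map φ).prod * φ uu := by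
        conv_lhs => rw [← huu]
        rw [map_mul, map_multiset_prod]
      have : g₁ ∣ ((UniqueFactorizationMonoid.factors P').map φ).prod * φ uu := by
        rw [← h1]; exact hg₁P
      exact (hg₁prime.dvd_mul.mp this).resolve_right (fun hdvd => hg₁irr.not_isUnit
        (isUnit_of_dvd_unit hdvd ((uu.isUnit).map φ)))
    obtain ⟨y, hy, hg₁y⟩ := hg₁prime.exists_mem_multiset_dvd hg₁prod
    obtain ⟨f, hf, rfl⟩ := Multiset.mem_map.mp hy
    have hfirr : Irreducible f := UniqueFactorizationMonoid.irreducible_of_factor f hf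
    have hfP : f ∣ P' := UniqueFactorizationMonoid.dvd_of_mem_factors hf
    -- f has positive degree
    have hfdeg : f.natDegree ≠ 0 := by
      intro h0
      have : f = Polynomial.C (f.coeff 0) := Polynomial.eq_C_of_natDegree_eq_zero h0
      have hc0 : f.coeff 0 ≠ 0 := fun h => hfirr.ne_zero (by rw [this, h, map_zero])
      have : IsUnit (φ f) := by
        rw [this]
        simp only [hφ, Polynomial.map_C, Polynomial.coe_mapRingHom]
        exact (Polynomial.isUnit_C).mpr ((isUnit_iff_ne_zero).mpr
          (fun h => hc0 ((IsFractionRing.injective (Polynomial ℝ) K) (by simpa using h))))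
      exact hg₁irr.not_isUnit (isUnit_of_dvd_unit hg₁y this)
    -- f is primitive
    have hfprim : f.IsPrimitive := by
      intro r hr
      obtain ⟨w, hw⟩ := hr
      rcases hfirr.isUnit_or_isUnit hw with h | h
      · exact Polynomial.isUnit_C.mp h
      · exfalso
        apply hfdeg
        have : f.natDegree ≤ 0 := by
          rw [hw]
          refine le_trans (Polynomial.natDegree_mul_le) ?_
          simp [Polynomial.natDegree_C, Polynomial.natDegree_eq_zero_of_isUnit h]
        omega
    -- map of f is irreducible, hence associated to g₁, so (φ f) ∣ φ Q'
    have hfmapirr : Irreducible (φ f) :=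
      (hfprim.irreducible_iff_irreducible_map_fraction_map).mp hfirr
    have hassoc : Associated g₁ (φ f) := hg₁irr.associated_of_dvd hfmapirr hg₁y
    have hfQmap : φ f ∣ φ Q' := hassoc.symm.dvd.trans hg₁Q
    -- descend divisibility to (Polynomial ℝ)[X]
    obtain ⟨w, hw⟩ := hfQmap
    obtain ⟨b, hb⟩ := IsLocalization.integerNormalization_map_to_map
      (nonZeroDivisors (Polynomial ℝ)) w
    have hbne : (b : Polynomial ℝ) ≠ 0 := nonZeroDivisors.coe_ne_zero b
    have hQb : f * IsLocalization.integerNormalization (nonZeroDivisors (Polynomial ℝ)) w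
        = Polynomial.C (b : Polynomial ℝ) * Q' := by
      apply hφinj
      rw [map_mul, map_mul]
      show φ f * ((IsLocalization.integerNormalization _ w).map
        (algebraMap (Polynomial ℝ) K)) = φ (Polynomial.C (b : Polynomial ℝ)) * φ Q'
      rw [hb, smul_eq_CC]
      have : φ (Polynomial.C (b : Polynomial ℝ))
          = Polynomial.C (algebraMap (Polynomial ℝ) K (b : Polynomial ℝ)) := by
        simp [hφ]
      rw [this, hw]; ring
    have hfQ : f ∣ Q' := by
      have hfdvd : f ∣ Polynomial.C (b : Polynomial ℝ) * Q' :=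
        ⟨IsLocalization.integerNormalization (nonZeroDivisors (Polynomial ℝ)) w, hQb.symm⟩
      rcases (UniqueFactorizationMonoid.irreducible_iff_prime.mp hfirr).dvd_mul.mp hfdvd with h | h
      · exfalso
        have := Polynomial.natDegree_le_of_dvd h (by simpa using hbne)
        simp [Polynomial.natDegree_C] at this
        exact hfdeg this
      · exact h
    -- pull back to MvPolynomial and contradict hrel
    have hcP : eQ.symm f ∣ P := by
      have := map_dvd eQ.symm hfP
      rwa [hP', AlgEquiv.symm_apply_apply] at this
    have hcQ : eQ.symm f ∣ Q := by
      have := map_dvd eQ.symm hfQ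
      rwa [hQ', AlgEquiv.symm_apply_apply] at this
    have := hrel _ hcP hcQ
    have : IsUnit f := by
      have h2 := this.map eQ
      rwa [AlgEquiv.apply_symm_apply] at h2
    exact hfirr.not_isUnit this
  -- clear denominators in the Bezout identity
  obtain ⟨u, v, huv⟩ := hcop
  obtain ⟨bu, hbu⟩ := IsLocalization.integerNormalization_map_to_map
    (nonZeroDivisors (Polynomial ℝ)) u
  obtain ⟨bv, hbv⟩ := IsLocalization.integerNormalization_map_to_map
    (nonZeroDivisors (Polynomial ℝ)) v
  set u₀ := IsLocalization.integerNormalization (nonZeroDivisors (Polynomial ℝ)) u with hu₀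
  set v₀ := IsLocalization.integerNormalization (nonZeroDivisors (Polynomial ℝ)) v with hv₀
  set d : Polynomial ℝ := (bu : Polynomial ℝ) * (bv : Polynomial ℝ) with hd
  have hdne : d ≠ 0 := mul_ne_zero (nonZeroDivisors.coe_ne_zero bu) (nonZeroDivisors.coe_ne_zero bv)
  have hkey : Polynomial.C (bv : Polynomial ℝ) * u₀ * P' + Polynomial.C (bu : Polynomial ℝ) * v₀ * Q'
      = Polynomial.C d := by
    apply hφinj
    have hmu : φ u₀ = Polynomial.C (algebraMap (Polynomial ℝ) K (bu : Polynomial ℝ)) * u := by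
      show (u₀.map (algebraMap (Polynomial ℝ) K)) = _
      rw [hbu, smul_eq_CC]
    have hmv : φ v₀ = Polynomial.C (algebraMap (Polynomial ℝ) K (bv : Polynomial ℝ)) * v := by
      show (v₀.map (algebraMap (Polynomial ℝ) K)) = _
      rw [hbv, smul_eq_CC]
    have hCb : ∀ c : Polynomial ℝ, φ (Polynomial.C c)
        = Polynomial.C (algebraMap (Polynomial ℝ) K c) := by
      intro c
      show (Polynomial.C c).map (algebraMap (Polynomial ℝ) K) = _
      rw [Polynomial.map_C]
    rw [map_add, map_mul, map_mul, map_mul, map_mul, hmu, hmv, hCb, hCb, hCb, hd, map_mul,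
      Polynomial.C_mul]
    linear_combination (Polynomial.C (algebraMap (Polynomial ℝ) K (bu : Polynomial ℝ)) *
      Polynomial.C (algebraMap (Polynomial ℝ) K (bv : Polynomial ℝ))) * huv
  have hsm : eQ.symm (Polynomial.C d) = inT d := by
    rw [← eQ_inT d, AlgEquiv.symm_apply_apply]
  have hfin := congrArg eQ.symm hkey
  simp only [map_add, map_mul, AlgEquiv.symm_apply_apply, hP', hQ', hsm] at hfin
  exact ⟨d, hdne, eQ.symm (Polynomial.C (bv : Polynomial ℝ)) * eQ.symm u₀,
    eQ.symm (Polynomial.C (bu : Polynomial ℝ)) * eQ.symm v₀, hfin⟩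

end Aux

section Chain

abbrev FF : Type := AlgebraicClosure (RatFunc ℝ)

lemma tr_aeval_ne {u : FF} (hu : Transcendental ℝ u) {p : Polynomial ℝ} (hp : p ≠ 0) :
    Polynomial.aeval u p ≠ 0 := fun h => hu ⟨p, hp, h⟩

lemma trans_x : Transcendental ℝ (algebraMap (RatFunc ℝ) FF RatFunc.X) := by
  have h1 : Transcendental ℝ (RatFunc.X : RatFunc ℝ) := by
    rw [← RatFunc.algebraMap_X]
    exact (transcendental_algebraMap_iff
      (IsFractionRing.injective (Polynomial ℝ) (RatFunc ℝ))).mpr (Polynomial.transcendental_X ℝ)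
  exact (transcendental_algebraMap_iff (algebraMap (RatFunc ℝ) FF).injective).mpr h1

lemma eQ_C (r : ℝ) : eQ (MvPolynomial.C r) = Polynomial.C (Polynomial.C r) := by
  have := eQ.commutes r
  simpa [MvPolynomial.algebraMap_eq] using this

noncomputable def HsP (h : MvPolynomial (Fin 2) ℝ) (u : FF) : Polynomial FF :=
  Polynomial.map ((Polynomial.aeval u : Polynomial ℝ →ₐ[ℝ] FF) : Polynomial ℝ →+* FF) (eQ h)

lemma eval_HsP (h : MvPolynomial (Fin 2) ℝ) (u v : FF) :
    Polynomial.eval v (HsP h u) = MvPolynomial.aeval ![u, v] h := by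
  have hcomp : (Polynomial.evalRingHom v).comp
      ((Polynomial.mapRingHom ((Polynomial.aeval u : Polynomial ℝ →ₐ[ℝ] FF) :
          Polynomial ℝ →+* FF)).comp (eQ : MvPolynomial (Fin 2) ℝ ≃ₐ[ℝ] _).toRingEquiv.toRingHom)
      = (MvPolynomial.aeval ![u, v] : MvPolynomial (Fin 2) ℝ →ₐ[ℝ] FF).toRingHom := by
    apply MvPolynomial.ringHom_ext
    · intro r
      simp [eQ_C]
    · intro i
      fin_cases i
      · simp [eQ_X0, Matrix.cons_val_zero]
      · simp [eQ_X1]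
  exact DFunLike.congr_fun hcomp h

lemma aeval_inT {S : Type*} [CommRing S] [Algebra ℝ S] (pt : Fin 2 → S) (p : Polynomial ℝ) :
    MvPolynomial.aeval pt (inT p) = Polynomial.aeval (pt 0) p := by
  rw [inT, ← Polynomial.aeval_algHom_apply (MvPolynomial.aeval pt)]
  simp

lemma aeval_inS {S : Type*} [CommRing S] [Algebra ℝ S] (pt : Fin 2 → S) (p : Polynomial ℝ) :
    MvPolynomial.aeval pt (inS p) = Polynomial.aeval (pt 1) p := by
  rw [inS, ← Polynomial.aeval_algHom_apply (MvPolynomial.aeval pt)]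
  simp

end Chain

section Next

open IntermediateField

lemma swapE_symm_inT (p : Polynomial ℝ) : swapE.symm (inT p) = inS p := by
  apply swapE.injective
  rw [AlgEquiv.apply_symm_apply, swapE_inS]

lemma comp_swap (u v : FF) : ![v, u] ∘ (Equiv.swap (0 : Fin 2) 1) = ![u, v] := by
  funext i
  fin_cases i
  · simp [Equiv.swap_apply_left]
  · simp [Equiv.swap_apply_right]

lemma aeval_swapE (hh : MvPolynomial (Fin 2) ℝ) (u v : FF) :
    MvPolynomial.aeval ![v, u] (swapE hh) = MvPolynomial.aeval ![u, v] hh := by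
  rw [swapE, MvPolynomial.renameEquiv_apply, MvPolynomial.aeval_rename, comp_swap]

set_option maxHeartbeats 1000000 in
set_option synthInstance.maxHeartbeats 400000 in
lemma next_step (A B : Polynomial ℝ) (hB : B ≠ 0) (hAB : IsCoprime A B)
    (hr : ¬ (A.natDegree = 0 ∧ B.natDegree = 0)) {h : MvPolynomial (Fin 2) ℝ}
    (hh : ¬ IsUnit h) (hha : h ∣ alphaPoly A B) {u : FF} (hu : Transcendental ℝ u) :
    ∃ v : FF, Transcendental ℝ v ∧ MvPolynomial.aeval ![u, v] h = 0 := by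
  have hα0 : alphaPoly A B ≠ 0 := by
    intro h0
    exact Polynomial.not_isUnit_X
      (onevar_t hB hAB hr (p := Polynomial.X) (h0 ▸ dvd_zero _))
  have hne : h ≠ 0 := by
    rintro rfl
    exact hα0 (zero_dvd_iff.mp hha)
  have heQne : eQ h ≠ 0 := fun h0 => hne (by
    have := congrArg eQ.symm h0
    simpa using this)
  have hdegeQ : (eQ h).degree ≠ 0 := by
    intro hdeg
    have hC : eQ h = Polynomial.C ((eQ h).coeff 0) :=
      Polynomial.eq_C_of_degree_le_zero (le_of_eq hdeg)
    have hinTh : h = inT ((eQ h).coeff 0) := by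
      apply eQ.injective
      rw [eQ_inT, ← hC]
    have hU := onevar_t hB hAB hr (hinTh ▸ hha)
    apply hh
    have h1 : IsUnit (Polynomial.C ((eQ h).coeff 0)) := Polynomial.isUnit_C.mpr hU
    have h2 := h1.map eQ.symm
    rwa [show eQ.symm (Polynomial.C ((eQ h).coeff 0)) = h from by
      rw [← hC, AlgEquiv.symm_apply_apply]] at h2
  have hinj : Function.Injective (⇑(Polynomial.aeval u : Polynomial ℝ →ₐ[ℝ] FF)) :=
    transcendental_iff_injective.mp hu
  have hdeg2 : (HsP h u).degree ≠ 0 := by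
    have hq := Polynomial.degree_map_eq_of_injective
      (f := ((Polynomial.aeval u : Polynomial ℝ →ₐ[ℝ] FF) : Polynomial ℝ →+* FF)) hinj (eQ h)
    rw [HsP, hq]
    exact hdegeQ
  obtain ⟨v, hv⟩ := IsAlgClosed.exists_root _ hdeg2
  have hroot : MvPolynomial.aeval ![u, v] h = 0 := by rw [← eval_HsP]; exact hv
  refine ⟨v, ?_, hroot⟩
  by_contra htr
  rw [Transcendental, not_not] at htr
  have hvint : IsIntegral ℝ v := htr.isIntegral
  have hroot2 : Polynomial.eval u (HsP (swapE h) v) = 0 := by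
    rw [eval_HsP, aeval_swapE, hroot]
  by_cases hzero : HsP (swapE h) v = 0
  · have hcoeff : ∀ j, Polynomial.aeval v ((eQ (swapE h)).coeff j) = 0 := by
      intro j
      have := congrArg (fun q => Polynomial.coeff q j) hzero
      simpa [HsP, Polynomial.coeff_map] using this
    have hdvd : Polynomial.C (minpoly ℝ v) ∣ eQ (swapE h) :=
      (Polynomial.C_dvd_iff_dvd_coeff _ _).mpr (fun j => minpoly.dvd ℝ v (hcoeff j))
    have hdvd2 : inT (minpoly ℝ v) ∣ swapE h := by
      have := map_dvd eQ.symm hdvd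
      rw [AlgEquiv.symm_apply_apply] at this
      rwa [show eQ.symm (Polynomial.C (minpoly ℝ v)) = inT (minpoly ℝ v) from by
        rw [← eQ_inT, AlgEquiv.symm_apply_apply]] at this
    have hdvd3 : inS (minpoly ℝ v) ∣ h := by
      have := map_dvd swapE.symm hdvd2
      rwa [AlgEquiv.symm_apply_apply, swapE_symm_inT] at this
    have hU := onevar_s hB hAB hr (hdvd3.trans hha)
    exact minpoly.not_isUnit ℝ v hU
  · set L := ℝ⟮v⟯ with hL
    set gen := IntermediateField.AdjoinSimple.gen ℝ v with hgen
    set HH := Polynomial.map ((Polynomial.aeval gen : Polynomial ℝ →ₐ[ℝ] L) :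
      Polynomial ℝ →+* L) (eQ (swapE h)) with hHH
    have hmapHH : HH.map (algebraMap L FF) = HsP (swapE h) v := by
      rw [hHH, Polynomial.map_map, HsP]
      congr 1
      refine RingHom.ext (fun p => ?_)
      show algebraMap L FF (Polynomial.aeval gen p) = Polynomial.aeval v p
      rw [← Polynomial.aeval_algebraMap_apply, IntermediateField.AdjoinSimple.algebraMap_gen]
    have hHHne : HH ≠ 0 := by
      intro h0
      apply hzero
      rw [← hmapHH, h0, Polynomial.map_zero]
    have haeu : Polynomial.aeval u HH = 0 := by
      rw [Polynomial.aeval_def, ← Polynomial.eval_map, hmapHH]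
      exact hroot2
    have halgu : IsAlgebraic L u := ⟨HH, hHHne, haeu⟩
    haveI := IntermediateField.adjoin.finiteDimensional hvint
    haveI : Algebra.IsIntegral ℝ L := Algebra.IsIntegral.of_finite ℝ L
    have hint : IsIntegral ℝ u := isIntegral_trans u halgu.isIntegral
    exact hu hint.isAlgebraic

end Next

section Part1

lemma aeval_alpha {S : Type*} [CommRing S] [Algebra ℝ S] (A B : Polynomial ℝ) (pt : Fin 2 → S) :
    MvPolynomial.aeval pt (alphaPoly A B) =
      Polynomial.aeval (pt 0) A * Polynomial.aeval (pt 1) B -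
        Polynomial.aeval (pt 1) A * Polynomial.aeval (pt 0) B := by
  simp [alphaPoly, aeval_inT, aeval_inS]

lemma aeval_beta {S : Type*} [CommRing S] [Algebra ℝ S] (C D : Polynomial ℝ) (k : ℝ)
    (pt : Fin 2 → S) :
    MvPolynomial.aeval pt (betaPoly C D k) =
      Polynomial.aeval (pt 0) C * Polynomial.aeval (pt 1) D -
        Polynomial.aeval (pt 1) C * Polynomial.aeval (pt 0) D -
        algebraMap ℝ S (2 * k * Real.pi) *
          (Polynomial.aeval (pt 0) D * Polynomial.aeval (pt 1) D) := by
  simp [betaPoly, aeval_inT, aeval_inS]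

set_option maxHeartbeats 1000000 in
set_option synthInstance.maxHeartbeats 400000 in
lemma coprime_part (A B C D : Polynomial ℝ) (hB : B ≠ 0) (hD : D ≠ 0)
    (hAB : IsCoprime A B) (hr : ¬ (A.natDegree = 0 ∧ B.natDegree = 0))
    (k : ℝ) (hk : k ≠ 0) :
    ∀ c : MvPolynomial (Fin 2) ℝ, c ∣ alphaPoly A B → c ∣ betaPoly C D k → IsUnit c := by
  intro h hha hhb
  by_contra hh
  haveI : CharZero FF := charZero_of_injective_algebraMap (algebraMap ℝ FF).injective
  set x : FF := algebraMap (RatFunc ℝ) FF RatFunc.X with hxdef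
  have hx : Transcendental ℝ x := trans_x
  let T := {u : FF // Transcendental ℝ u}
  let g : T → T := fun u => ⟨(next_step A B hB hAB hr hh hha u.2).choose,
    (next_step A B hB hAB hr hh hha u.2).choose_spec.1⟩
  let sq : ℕ → T := fun n => g^[n] ⟨x, hx⟩
  have hs0 : (sq 0).1 = x := rfl
  have htr : ∀ n, Transcendental ℝ (sq n).1 := fun n => (sq n).2
  have hrel : ∀ n, MvPolynomial.aeval ![(sq n).1, (sq (n+1)).1] h = 0 := by
    intro n
    have hit : sq (n+1) = g (sq n) := Function.iterate_succ_apply' g n _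
    rw [hit]
    exact (next_step A B hB hAB hr hh hha (sq n).2).choose_spec.2
  have hαv : ∀ n, MvPolynomial.aeval ![(sq n).1, (sq (n+1)).1] (alphaPoly A B) = 0 := by
    intro n
    obtain ⟨w, hw⟩ := hha
    rw [hw, map_mul, hrel n, zero_mul]
  have hβv : ∀ n, MvPolynomial.aeval ![(sq n).1, (sq (n+1)).1] (betaPoly C D k) = 0 := by
    intro n
    obtain ⟨w, hw⟩ := hhb
    rw [hw, map_mul, hrel n, zero_mul]
  have hα : ∀ n, Polynomial.aeval (sq n).1 A * Polynomial.aeval (sq (n+1)).1 B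
      = Polynomial.aeval (sq (n+1)).1 A * Polynomial.aeval (sq n).1 B := by
    intro n
    have := hαv n
    rw [aeval_alpha] at this
    simpa [sub_eq_zero] using this
  have hβ : ∀ n, Polynomial.aeval (sq n).1 C * Polynomial.aeval (sq (n+1)).1 D
      - Polynomial.aeval (sq (n+1)).1 C * Polynomial.aeval (sq n).1 D
      - algebraMap ℝ FF (2 * k * Real.pi) *
        (Polynomial.aeval (sq n).1 D * Polynomial.aeval (sq (n+1)).1 D) = 0 := by
    intro n
    have := hβv n
    rw [aeval_beta] at this
    simp only [Matrix.cons_val_zero, Matrix.cons_val_one, Matrix.head_cons] at this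
    exact this
  have Bne : ∀ n, Polynomial.aeval (sq n).1 B ≠ 0 := fun n => tr_aeval_ne (htr n) hB
  have Dne : ∀ n, Polynomial.aeval (sq n).1 D ≠ 0 := fun n => tr_aeval_ne (htr n) hD
  have rcross : ∀ n, Polynomial.aeval (sq n).1 A * Polynomial.aeval x B
      = Polynomial.aeval x A * Polynomial.aeval (sq n).1 B := by
    intro n
    induction n with
    | zero => rw [hs0]
    | succ n ih =>
        apply mul_left_cancel₀ (Bne n)
        linear_combination (Polynomial.aeval x B) * (hα n).symm
          + (Polynomial.aeval (sq (n+1)).1 B) * ih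
  set κ : FF := algebraMap ℝ FF (2 * k * Real.pi) with hκdef
  have hκ : κ ≠ 0 := by
    intro hc
    have h2 : (2 * k * Real.pi) = 0 := (algebraMap ℝ FF).injective
      (by rw [map_zero, ← hκdef, hc])
    exact (mul_ne_zero (mul_ne_zero two_ne_zero hk) Real.pi_ne_zero) h2
  have τstep : ∀ n, Polynomial.aeval (sq (n+1)).1 C / Polynomial.aeval (sq (n+1)).1 D
      = Polynomial.aeval (sq n).1 C / Polynomial.aeval (sq n).1 D - κ := by
    intro n
    field_simp [Dne n, Dne (n+1)]
    linear_combination -(hβ n)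
  have τn : ∀ n, Polynomial.aeval (sq n).1 C / Polynomial.aeval (sq n).1 D
      = Polynomial.aeval x C / Polynomial.aeval x D - (n : FF) * κ := by
    intro n
    induction n with
    | zero => rw [hs0]; simp
    | succ n ih => rw [τstep n, ih]; push_cast; ring
  have sinj : Function.Injective (fun n : ℕ => (sq n).1) := by
    intro m n hmn
    have hmn' : (sq m).1 = (sq n).1 := hmn
    have h4 : Polynomial.aeval x C / Polynomial.aeval x D - (m : FF) * κ
        = Polynomial.aeval x C / Polynomial.aeval x D - (n : FF) * κ := by
      rw [← τn m, ← τn n, hmn']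
    have h5 : (m : FF) = (n : FF) := by
      have h6 : (m : FF) * κ = (n : FF) * κ := by linear_combination -h4
      exact mul_right_cancel₀ hκ h6
    exact_mod_cast h5
  set P : Polynomial FF := Polynomial.C (Polynomial.aeval x B) * A.map (algebraMap ℝ FF)
    - Polynomial.C (Polynomial.aeval x A) * B.map (algebraMap ℝ FF) with hP
  have hPne : P ≠ 0 := by
    intro h0
    have hcoeff : ∀ j, Polynomial.aeval x B * algebraMap ℝ FF (A.coeff j)
        = Polynomial.aeval x A * algebraMap ℝ FF (B.coeff j) := by
      intro j
      have := congrArg (fun q => Polynomial.coeff q j) h0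
      simp only [hP, Polynomial.coeff_sub, Polynomial.coeff_C_mul, Polynomial.coeff_map,
        Polynomial.coeff_zero] at this
      linear_combination this
    have hbJ : B.coeff B.natDegree ≠ 0 := Polynomial.leadingCoeff_ne_zero.mpr hB
    have halgbJ : algebraMap ℝ FF (B.coeff B.natDegree) ≠ 0 := fun hz =>
      hbJ ((algebraMap ℝ FF).injective (by rw [hz, map_zero]))
    set c : ℝ := A.coeff B.natDegree / B.coeff B.natDegree with hcdef
    have hAx : Polynomial.aeval x A = algebraMap ℝ FF c * Polynomial.aeval x B := by
      rw [hcdef, map_div₀, div_mul_eq_mul_div, eq_div_iff halgbJ]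
      linear_combination -hcoeff B.natDegree
    have hq0 : A - c • B = 0 := by
      by_contra hq
      apply tr_aeval_ne hx hq
      rw [map_sub, map_smul, Algebra.smul_def, hAx]
      ring
    have hBA : B ∣ A := ⟨Polynomial.C c, by
      have h6 := sub_eq_zero.mp hq0
      rw [h6, Polynomial.smul_eq_C_mul]; ring⟩
    have hBu : IsUnit B := hAB.isUnit_of_dvd' hBA dvd_rfl
    have hBdeg : B.natDegree = 0 := Polynomial.natDegree_eq_zero_of_isUnit hBu
    have hAdeg : A.natDegree = 0 := by
      have h6 : A = c • B := sub_eq_zero.mp hq0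
      have h7 := Polynomial.natDegree_smul_le c B
      rw [← h6] at h7
      omega
    exact hr ⟨hAdeg, hBdeg⟩
  have hProot : ∀ n, P.eval (sq n).1 = 0 := by
    intro n
    rw [hP]
    simp only [Polynomial.eval_sub, Polynomial.eval_mul, Polynomial.eval_C, Polynomial.eval_map]
    rw [show Polynomial.eval₂ (algebraMap ℝ FF) ((sq n).1) A = Polynomial.aeval (sq n).1 A from rfl,
      show Polynomial.eval₂ (algebraMap ℝ FF) ((sq n).1) B = Polynomial.aeval (sq n).1 B from rfl]
    linear_combination rcross n
  have hsub : Set.range (fun n : ℕ => (sq n).1) ⊆ {y : FF | P.IsRoot y} := by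
    rintro _ ⟨n, rfl⟩
    exact hProot n
  exact (Set.infinite_range_of_injective sinj) ((Polynomial.finite_setOf_isRoot hPne).subset hsub)

end Part1

set_option maxHeartbeats 1000000 in
theorem alpha_beta_coprime_and_finitely_many_solutions
    (A B C D : Polynomial ℝ) (hB : B ≠ 0) (hD : D ≠ 0)
    (hAB : IsCoprime A B) (hCD : IsCoprime C D)
    (hr : ¬ (A.natDegree = 0 ∧ B.natDegree = 0))
    (hθ : ¬ (C.natDegree = 0 ∧ D.natDegree = 0))
    (k : ℝ) (hk : k ≠ 0) :
    (∀ c : MvPolynomial (Fin 2) ℝ, c ∣ alphaPoly A B → c ∣ betaPoly C D k → IsUnit c) ∧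
    {p : ℝ × ℝ |
        (B.eval p.1 ≠ 0 ∧ D.eval p.1 ≠ 0) ∧ (B.eval p.2 ≠ 0 ∧ D.eval p.2 ≠ 0) ∧
        A.eval p.1 / B.eval p.1 = A.eval p.2 / B.eval p.2 ∧
        C.eval p.1 / D.eval p.1 = C.eval p.2 / D.eval p.2 + 2 * k * Real.pi}.Finite := by
  have part1 := coprime_part A B C D hB hD hAB hr k hk
  refine ⟨part1, ?_⟩
  have hα0 : alphaPoly A B ≠ 0 := by
    intro h0
    exact Polynomial.not_isUnit_X
      (onevar_t hB hAB hr (p := Polynomial.X) (h0 ▸ dvd_zero _))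
  obtain ⟨dT, hdT0, U, V, hUV⟩ := aux_bezout (alphaPoly A B) (betaPoly C D k) part1 hα0
  set α2 := swapE (alphaPoly A B) with hα2
  set β2 := swapE (betaPoly C D k) with hβ2
  have hrel2 : ∀ c : MvPolynomial (Fin 2) ℝ, c ∣ α2 → c ∣ β2 → IsUnit c := by
    intro c h1 h2
    have h1' : swapE.symm c ∣ alphaPoly A B := by
      have := map_dvd swapE.symm h1
      rwa [hα2, AlgEquiv.symm_apply_apply] at this
    have h2' : swapE.symm c ∣ betaPoly C D k := by
      have := map_dvd swapE.symm h2
      rwa [hβ2, AlgEquiv.symm_apply_apply] at this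
    have h3 := (part1 _ h1' h2').map swapE
    rwa [AlgEquiv.apply_symm_apply] at h3
  have hα20 : α2 ≠ 0 := fun h0 => hα0 (by
    have := congrArg swapE.symm h0
    simpa [hα2] using this)
  obtain ⟨dS, hdS0, U2, V2, hUV2⟩ := aux_bezout α2 β2 hrel2 hα20
  have hUV2' : swapE.symm U2 * alphaPoly A B + swapE.symm V2 * betaPoly C D k = inS dS := by
    have := congrArg swapE.symm hUV2
    rw [map_add, map_mul, map_mul, hα2, hβ2, AlgEquiv.symm_apply_apply,
      AlgEquiv.symm_apply_apply, swapE_symm_inT] at this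
    exact this
  refine Set.Finite.subset (Set.Finite.prod (Polynomial.finite_setOf_isRoot hdT0)
    (Polynomial.finite_setOf_isRoot hdS0)) ?_
  rintro ⟨t₀, s₀⟩ ⟨⟨hBt, hDt⟩, ⟨hBs, hDs⟩, hre, hθe⟩
  have hαe : MvPolynomial.aeval (![t₀, s₀] : Fin 2 → ℝ) (alphaPoly A B) = 0 := by
    rw [aeval_alpha]
    simp only [Matrix.cons_val_zero, Matrix.cons_val_one, Matrix.head_cons,
      Polynomial.coe_aeval_eq_eval]
    have h7 := (div_eq_div_iff hBt hBs).mp hre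
    linear_combination h7
  have hβe : MvPolynomial.aeval (![t₀, s₀] : Fin 2 → ℝ) (betaPoly C D k) = 0 := by
    rw [aeval_beta]
    simp only [Matrix.cons_val_zero, Matrix.cons_val_one, Matrix.head_cons,
      Polynomial.coe_aeval_eq_eval, Algebra.algebraMap_self, RingHom.id_apply]
    have h8 := hθe
    field_simp at h8
    linear_combination h8
  constructor
  · have h9 := congrArg (MvPolynomial.aeval (![t₀, s₀] : Fin 2 → ℝ)) hUV
    rw [map_add, map_mul, map_mul, hαe, hβe, mul_zero, mul_zero, add_zero, aeval_inT] at h9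
    simp only [Matrix.cons_val_zero, Polynomial.coe_aeval_eq_eval] at h9
    exact h9.symm
  · have h9 := congrArg (MvPolynomial.aeval (![t₀, s₀] : Fin 2 → ℝ)) hUV2'
    rw [map_add, map_mul, map_mul, hαe, hβe, mul_zero, mul_zero, add_zero, aeval_inS] at h9
    simp only [Matrix.cons_val_one, Matrix.head_cons, Polynomial.coe_aeval_eq_eval] at h9
    exact h9.symm
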